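/- Improvement by rescaling periods: let n, N be integers with 1 < N < n, let G = mI for a positive integer m and I > 0. If G' = lG with 1 < l < sqrt((1/m²)·(n−N)/N + 1) and I' = qI with 0 < q ≤ sqrt(1 − m²(l²−1)·N/(n−N)), then ((N−1)/(n−1))·G'² + (1 − (N−1)/(n−1))·I'² ≤ ((N−1)/(n−1))·G² + (1 − (N−1)/(n−1))·I², i.e., increasing the global period to G' while decreasing the local period to I' does not increase the divergence coefficient in the convergence bound. -/

import Mathlib

theorem improvement_by_rescaling {n N m : ℕ} (hN : 1 < N) (hn : N < n) (hm : 0 < m)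
    {I G l q G' I' : ℝ} (hI : 0 < I) (hG : G = (m : ℝ) * I)
    (hl1 : 1 < l)
    (hl2 : l < Real.sqrt ((1 / (m : ℝ) ^ 2) * (((n : ℝ) - (N : ℝ)) / (N : ℝ)) + 1))
    (hq1 : 0 < q)
    (hq2 : q ≤ Real.sqrt (1 - (m : ℝ) ^ 2 * (l ^ 2 - 1) * (N : ℝ) / ((n : ℝ) - (N : ℝ))))
    (hG' : G' = l * G) (hI' : I' = q * I) :
    ((N : ℝ) - 1) / ((n : ℝ) - 1) * G' ^ 2
        + (1 - ((N : ℝ) - 1) / ((n : ℝ) - 1)) * I' ^ 2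
      ≤ ((N : ℝ) - 1) / ((n : ℝ) - 1) * G ^ 2
        + (1 - ((N : ℝ) - 1) / ((n : ℝ) - 1)) * I ^ 2 := by
  have hm1 : (1:ℝ) ≤ (m:ℝ) := by exact_mod_cast hm
  have hN1 : (1:ℝ) < (N:ℝ) := by exact_mod_cast hN
  have hnN : (N:ℝ) < (n:ℝ) := by exact_mod_cast hn
  have hnN' : (0:ℝ) < (n:ℝ) - (N:ℝ) := by linarith
  have hn1 : (0:ℝ) < (n:ℝ) - 1 := by linarith
  have hq2' : q ^ 2 ≤ 1 - (m : ℝ) ^ 2 * (l ^ 2 - 1) * (N : ℝ) / ((n : ℝ) - (N : ℝ)) :=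
    (Real.le_sqrt' hq1).mp hq2
  have key : q ^ 2 * ((n:ℝ) - N) ≤ ((n:ℝ) - N) - (m : ℝ) ^ 2 * (l ^ 2 - 1) * (N : ℝ) := by
    have := mul_le_mul_of_nonneg_right hq2' hnN'.le
    calc q ^ 2 * ((n:ℝ) - N) ≤ (1 - (m : ℝ) ^ 2 * (l ^ 2 - 1) * (N : ℝ) / ((n : ℝ) - (N : ℝ))) * ((n:ℝ) - N) := this
    _ = ((n:ℝ) - N) - (m : ℝ) ^ 2 * (l ^ 2 - 1) * (N : ℝ) := by field_simp
  have h : ((N:ℝ)-1) * G' ^ 2 + ((n:ℝ)-(N:ℝ)) * I' ^ 2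
      ≤ ((N:ℝ)-1) * G ^ 2 + ((n:ℝ)-(N:ℝ)) * I ^ 2 := by
    subst hG hG' hI'
    have hl2sq : (0:ℝ) ≤ l ^ 2 - 1 := by nlinarith
    have h0 : (0:ℝ) ≤ (m:ℝ) ^ 2 * (l ^ 2 - 1) * I ^ 2 :=
      mul_nonneg (mul_nonneg (sq_nonneg _) hl2sq) (sq_nonneg I)
    nlinarith [mul_le_mul_of_nonneg_right key (sq_nonneg I)]
  have e : ∀ x y : ℝ, ((N:ℝ)-1)/((n:ℝ)-1)*x + (1 - ((N:ℝ)-1)/((n:ℝ)-1))*y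
      = (((N:ℝ)-1)*x + ((n:ℝ)-(N:ℝ))*y)/((n:ℝ)-1) := by
    intro x y; field_simp; ring
  rw [e, e]
  exact (div_le_div_iff_of_pos_right hn1).mpr h
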